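/- Let A be a nonnegative symmetric n×n matrix such that each row has at most one zero off-diagonal entry, and suppose n ≥ 3. If G is the cycle C_n, then there exists a path P with V(P) = V(G) such that F_A(C_n) < F_A(P). -/

import Mathlib

open SimpleGraph Finset

/-- `F_A(G) = ∑_{i<j} d_G(i,j) · a_{i,j}`. -/
noncomputable def FA {n : ℕ} (A : Matrix (Fin n) (Fin n) ℝ) (G : SimpleGraph (Fin n)) : ℝ :=
  ∑ i : Fin n, ∑ j : Fin n, if i < j then (G.dist i j : ℝ) * A i j else 0

/-- `G` is a path on its vertex set (isomorphic to the path graph). -/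
def IsPathGraph {n : ℕ} (G : SimpleGraph (Fin n)) : Prop :=
  Nonempty (G ≃g SimpleGraph.pathGraph n)

/-- The distance matrix of `G`. -/
noncomputable def distMat {n : ℕ} (G : SimpleGraph (Fin n)) : Matrix (Fin n) (Fin n) ℝ :=
  fun i j => (G.dist i j : ℝ)

/-- The diagonal matrix of row sums of the distance matrix. -/
noncomputable def transMat {n : ℕ} (G : SimpleGraph (Fin n)) : Matrix (Fin n) (Fin n) ℝ :=
  Matrix.diagonal fun i => ∑ j : Fin n, (G.dist i j : ℝ)

/-- Distance signless Laplacian `D^Q(G) = T(G) + D(G)`. -/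
noncomputable def DQmat {n : ℕ} (G : SimpleGraph (Fin n)) : Matrix (Fin n) (Fin n) ℝ :=
  transMat G + distMat G

/-- Distance Laplacian `D^L(G) = T(G) - D(G)`. -/
noncomputable def DLmat {n : ℕ} (G : SimpleGraph (Fin n)) : Matrix (Fin n) (Fin n) ℝ :=
  transMat G - distMat G

/-- Largest eigenvalue of a matrix, as the supremum of its spectrum. -/
noncomputable def maxEig {n : ℕ} (M : Matrix (Fin n) (Fin n) ℝ) : ℝ :=
  sSup (spectrum ℝ M)

lemma pathGraph_le_cycleGraph (m : ℕ) : pathGraph (m+3) ≤ cycleGraph (m+3) := by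
  intro i j h
  rw [pathGraph_adj] at h
  rw [cycleGraph_adj']
  have hi := i.isLt
  have hj := j.isLt
  rcases h with h | h
  · right
    rw [Fin.sub_def]
    show (m + 3 - (i : ℕ) + (j : ℕ)) % (m+3) = 1
    have h1 : m + 3 - (i : ℕ) + (j : ℕ) = (m+3) + 1 := by omega
    rw [h1, Nat.add_mod_left, Nat.mod_eq_of_lt (by omega)]
  · left
    rw [Fin.sub_def]
    show (m + 3 - (j : ℕ) + (i : ℕ)) % (m+3) = 1
    have h1 : m + 3 - (j : ℕ) + (i : ℕ) = (m+3) + 1 := by omega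
    rw [h1, Nat.add_mod_left, Nat.mod_eq_of_lt (by omega)]

lemma key_lemma {m : ℕ} (A : Matrix (Fin (m+3)) (Fin (m+3)) ℝ)
    (hnn : ∀ i j, 0 ≤ A i j) (c x y : Fin (m+3)) (hxy : x < y)
    (hadjC : (cycleGraph (m+3)).Adj x y) (hA : A x y ≠ 0)
    (hnadjP : ¬ (pathGraph (m+3)).Adj (x + c) (y + c)) :
    ∃ P : SimpleGraph (Fin (m+3)), IsPathGraph P ∧
      FA A (SimpleGraph.cycleGraph (m+3)) < FA A P := by
  set e : Fin (m+3) ≃ Fin (m+3) := Equiv.addRight c with he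
  refine ⟨(pathGraph (m+3)).comap e.toEmbedding, ⟨SimpleGraph.Iso.comap e _⟩, ?_⟩
  set P : SimpleGraph (Fin (m+3)) := (pathGraph (m+3)).comap e.toEmbedding with hP
  have hPadj : ∀ i j : Fin (m+3), P.Adj i j ↔ (pathGraph (m+3)).Adj (i + c) (j + c) := by
    intro i j; rfl
  have hle : P ≤ cycleGraph (m+3) := by
    intro i j h
    rw [hPadj] at h
    have h2 := pathGraph_le_cycleGraph m h
    rw [cycleGraph_adj'] at h2 ⊢
    have hsub : (i + c) - (j + c) = i - j := add_sub_add_right_eq_sub _ _ _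
    have hsub' : (j + c) - (i + c) = j - i := add_sub_add_right_eq_sub _ _ _
    rwa [hsub, hsub'] at h2
  have hPconn : P.Connected := by
    exact (SimpleGraph.Iso.comap e (pathGraph (m+3))).connected_iff.mpr (pathGraph_connected (m+2))
  have hd : ∀ i j : Fin (m+3), (cycleGraph (m+3)).dist i j ≤ P.dist i j := by
    intro i j
    obtain ⟨p, hp⟩ := hPconn.exists_walk_length_eq_dist i j
    calc (cycleGraph (m+3)).dist i j ≤ (p.mapLe hle).length := dist_le _
      _ = p.length := Walk.length_map _ _
      _ = P.dist i j := hp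
  have hCxy : (cycleGraph (m+3)).dist x y = 1 := dist_eq_one_iff_adj.mpr hadjC
  have hPxy : 2 ≤ P.dist x y := by
    have h0 : P.dist x y ≠ 0 := (hPconn.pos_dist_of_ne (ne_of_lt hxy)).ne'
    have h1 : P.dist x y ≠ 1 := by
      intro h
      exact hnadjP ((hPadj x y).mp (dist_eq_one_iff_adj.mp h))
    omega
  have hApos : 0 < A x y := (hnn x y).lt_of_ne (Ne.symm hA)
  unfold FA
  apply Finset.sum_lt_sum
  · intro i _
    apply Finset.sum_le_sum
    intro j _
    split
    · exact mul_le_mul_of_nonneg_right (by exact_mod_cast hd i j) (hnn i j)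
    · exact le_refl _
  · refine ⟨x, Finset.mem_univ x, ?_⟩
    apply Finset.sum_lt_sum
    · intro j _
      split
      · exact mul_le_mul_of_nonneg_right (by exact_mod_cast hd x j) (hnn x j)
      · exact le_refl _
    · refine ⟨y, Finset.mem_univ y, ?_⟩
      rw [if_pos hxy, if_pos hxy, hCxy]
      have : (1 : ℝ) < (P.dist x y : ℝ) := by exact_mod_cast hPxy
      calc (1:ℕ) * A x y = 1 * A x y := by norm_num
        _ < (P.dist x y : ℝ) * A x y := by
            exact mul_lt_mul_of_pos_right (by simpa using this) hApos

theorem stmt_14 {n : ℕ} (hn : 3 ≤ n)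
    (A : Matrix (Fin n) (Fin n) ℝ) (hsymm : A.IsSymm) (hnn : ∀ i j, 0 ≤ A i j)
    (hrow : ∀ i j₁ j₂ : Fin n, j₁ ≠ i → j₂ ≠ i → A i j₁ = 0 → A i j₂ = 0 → j₁ = j₂) :
    ∃ P : SimpleGraph (Fin n), IsPathGraph P ∧
      FA A (SimpleGraph.cycleGraph n) < FA A P := by
  obtain ⟨m, rfl⟩ : ∃ m, n = m + 3 := ⟨n - 3, by omega⟩
  set last : Fin (m+3) := ⟨m+2, by omega⟩ with hlast
  have hv0 : ((0 : Fin (m+3)) : ℕ) = 0 := rfl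
  have hv1 : ((1 : Fin (m+3)) : ℕ) = 1 := by simp
  -- the two candidate edges at vertex 0
  have hadj01 : (cycleGraph (m+3)).Adj 0 1 := by
    rw [cycleGraph_adj']
    right
    rw [Fin.sub_def]
    simp
  have hadj0l : (cycleGraph (m+3)).Adj 0 last := by
    rw [cycleGraph_adj']
    left
    rw [Fin.sub_def]
    show (m + 3 - (last : ℕ) + ((0 : Fin (m+3)) : ℕ)) % (m+3) = 1
    have h1 : m + 3 - (last : ℕ) + ((0 : Fin (m+3)) : ℕ) = 1 := by simp [hlast]
    rw [h1, Nat.mod_eq_of_lt (by omega)]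
  have hne1l : (1 : Fin (m+3)) ≠ last := by
    simp only [Fin.ne_iff_vne, hv1, hlast]
    omega
  have hone : ¬ (A 0 1 = 0 ∧ A 0 last = 0) := by
    rintro ⟨h1, h2⟩
    exact hne1l (hrow 0 1 last (by simp [Fin.ne_iff_vne, hv1]) (by simp [Fin.ne_iff_vne, hlast]) h1 h2)
  by_cases hA1 : A 0 1 = 0
  · -- use edge (0, last) with c = 0
    have hA2 : A 0 last ≠ 0 := fun h => hone ⟨hA1, h⟩
    have hxy : (0 : Fin (m+3)) < last := by
      simp only [Fin.lt_iff_val_lt_val, hv0, hlast]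
      omega
    refine key_lemma A hnn 0 0 last hxy hadj0l hA2 ?_
    rw [add_zero, add_zero, pathGraph_adj]
    push_neg
    constructor <;> · simp only [hv0, hlast]; omega
  · -- use edge (0, 1) with c = last (= -1)
    have hxy : (0 : Fin (m+3)) < 1 := by
      simp only [Fin.lt_iff_val_lt_val, hv0, hv1]
      omega
    have h1l : (1 : Fin (m+3)) + last = 0 := by
      rw [Fin.ext_iff, Fin.add_def]
      show ((1 : Fin (m+3)).val + (last : ℕ)) % (m+3) = ((0:Fin (m+3)) : ℕ)
      rw [hv1]
      have h1 : 1 + (last : ℕ) = m + 3 := by show 1 + (m+2) = m+3; omega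
      rw [h1, Nat.mod_self, hv0]
    refine key_lemma A hnn last 0 1 hxy hadj01 hA1 ?_
    rw [zero_add, h1l, pathGraph_adj]
    push_neg
    constructor <;> · simp only [hv0, hlast]; omega
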